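/- arXiv:1807.10060 — 2 statements merged into one kernel-verified Lean document; each statement's English description precedes it below -/
import Mathlib

section
/- Let m ≥ 1 be an odd natural number and let E ∈ ℝ. Then there exists a constant C > 0 such that for all x ∈ ℝ one has |x+1|^{m-1} · |x - E| ≤ C · |(x+1)^m - (E+1)^m|. -/
-- a^(m-1) * c ≤ a^m + c^m for nonneg a, c, m ≥ 1
lemma myaux1 (m : ℕ) (hm : 1 ≤ m) (a c : ℝ) (ha : 0 ≤ a) (hc : 0 ≤ c) :
    a ^ (m - 1) * c ≤ a ^ m + c ^ m := by
  have hmm : m - 1 + 1 = m := Nat.succ_pred_eq_of_pos hm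
  rcases le_total a c with h | h
  · have : a ^ (m - 1) * c ≤ c ^ (m - 1) * c := by
      gcongr
    calc a ^ (m-1) * c ≤ c ^ (m-1) * c := this
      _ = c ^ m := by rw [← pow_succ, hmm]
      _ ≤ a ^ m + c ^ m := le_add_of_nonneg_left (by positivity)
  · have : a ^ (m - 1) * c ≤ a ^ (m - 1) * a := by gcongr
    calc a ^ (m-1) * c ≤ a ^ (m-1) * a := this
      _ = a ^ m := by rw [← pow_succ, hmm]
      _ ≤ a ^ m + c ^ m := le_add_of_nonneg_right (by positivity)

lemma mygeom (m : ℕ) (hm : 1 ≤ m) (a b : ℝ) (ha : 0 ≤ a) (hb : 0 ≤ b) :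
    a ^ (m - 1) ≤ ∑ i ∈ Finset.range m, a ^ i * b ^ (m - 1 - i) := by
  have hmem : m - 1 ∈ Finset.range m := Finset.mem_range.2 (by omega)
  have := Finset.single_le_sum (f := fun i => a ^ i * b ^ (m - 1 - i))
    (fun i _ => by positivity) hmem
  simpa using this

lemma mykey (m : ℕ) (hm : 1 ≤ m) (hodd : Odd m) (a b : ℝ) (ha : 0 ≤ a) :
    |a| ^ (m - 1) * |a - b| ≤ 2 * |a ^ m - b ^ m| := by
  have hmm : m - 1 + 1 = m := Nat.succ_pred_eq_of_pos hm
  rcases le_or_gt 0 b with hb | hb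
  · -- both nonneg
    set S := ∑ i ∈ Finset.range m, a ^ i * b ^ (m - 1 - i) with hS
    have hfac : S * (a - b) = a ^ m - b ^ m := geom_sum₂_mul a b m
    have hSnn : 0 ≤ S := Finset.sum_nonneg fun i _ => by positivity
    have h1 : |a ^ m - b ^ m| = S * |a - b| := by
      rw [← hfac, abs_mul, abs_of_nonneg hSnn]
    rw [h1, abs_of_nonneg ha]
    have := mygeom m hm a b ha hb
    nlinarith [abs_nonneg (a - b), pow_nonneg ha (m-1)]
  · -- b < 0
    set c := -b with hc
    have hc0 : 0 ≤ c := by simp [hc]; linarith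
    have hbm : b ^ m = -c ^ m := by
      rw [hc, Odd.neg_pow hodd, neg_neg]
    have h1 : |a - b| = a + c := by
      rw [abs_of_nonneg (by linarith)]; ring
    have h2 : |a ^ m - b ^ m| = a ^ m + c ^ m := by
      rw [hbm, sub_neg_eq_add]
      exact abs_of_nonneg (by positivity)
    rw [h1, h2, abs_of_nonneg ha]
    have haux := myaux1 m hm a c ha hc0
    have hpow : a ^ (m-1) * a = a ^ m := by rw [← pow_succ, hmm]
    nlinarith [pow_nonneg hc0 m, pow_nonneg ha m]

lemma mykey' (m : ℕ) (hm : 1 ≤ m) (hodd : Odd m) (a b : ℝ) :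
    |a| ^ (m - 1) * |a - b| ≤ 2 * |a ^ m - b ^ m| := by
  rcases le_or_gt 0 a with ha | ha
  · exact mykey m hm hodd a b ha
  · have := mykey m hm hodd (-a) (-b) (by linarith)
    have e1 : |-a| = |a| := abs_neg a
    have e2 : |-a - -b| = |a - b| := by rw [show -a - -b = -(a-b) by ring, abs_neg]
    have e3 : (-a) ^ m - (-b) ^ m = -(a ^ m - b ^ m) := by
      rw [Odd.neg_pow hodd, Odd.neg_pow hodd]; ring
    rwa [e1, e2, e3, abs_neg] at this

/-- For `m` odd, the rational function `g_E(x) = (x+1)^{m-1}(x-E)/((x+1)^m-(E+1)^m)` is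
bounded on the real line: `|x+1|^{m-1}|x-E| ≤ C |(x+1)^m - (E+1)^m|`. -/
theorem gE_bounded_on_real_line (m : ℕ) (hm : 1 ≤ m) (hodd : Odd m) (E : ℝ) :
    ∃ C : ℝ, 0 < C ∧ ∀ x : ℝ,
      |x + 1| ^ (m - 1) * |x - E| ≤ C * |(x + 1) ^ m - (E + 1) ^ m| := by
  refine ⟨2, by norm_num, fun x => ?_⟩
  have := mykey' m hm hodd (x + 1) (E + 1)
  simpa [show x + 1 - (E + 1) = x - E by ring] using this
end

section
/- Let m ≥ 1 be an odd natural number and let E ∈ ℝ. Then there exist ε₀ > 0 and a constant C > 0 such that for all x ∈ ℝ and all ε ∈ ℝ with 0 < |ε| < ε₀ one has |x+1|^{m-1} · |x - (E + iε)| ≤ C · |(x+1)^m - (1 + E + iε)^m|, where i denotes the imaginary unit and the absolute values on both sides are moduli of complex numbers. -/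
open Finset

private lemma gz_fact_eq (m : ℕ) (hm : 0 < m) {ζ : ℂ} (hζ : IsPrimitiveRoot ζ m) (y w : ℂ) :
    y ^ m - w ^ m = ∏ i ∈ Finset.range m, (y - ζ ^ i * w) := by
  have h := X_pow_sub_C_eq_prod hζ hm (rfl : w ^ m = w ^ m)
  have := congrArg (Polynomial.eval y) h
  simpa [Polynomial.eval_prod] using this

private lemma gz_pow_eq_one_nonneg {c : ℝ} (hc : 0 ≤ c) {m : ℕ} (hm : m ≠ 0)
    (h : c ^ m = 1) : c = 1 := by
  rcases lt_trichotomy c 1 with h' | h' | h'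
  · have := pow_lt_one₀ hc h' hm
    linarith
  · exact h'
  · have := one_lt_pow₀ h' hm
    linarith

private lemma gz_abs_pow_one {m : ℕ} (hm : m ≠ 0) {ζ : ℂ} (hζ : IsPrimitiveRoot ζ m)
    (i : ℕ) : ‖ζ ^ i‖ = 1 := by
  have h1 : ‖ζ‖ = 1 := by
    apply gz_pow_eq_one_nonneg (norm_nonneg ζ) hm
    rw [← norm_pow, hζ.pow_eq_one, norm_one]
  rw [norm_pow, h1, one_pow]

private lemma gz_im_ne (m : ℕ) (hodd : Odd m) {ζ : ℂ} (hζ : IsPrimitiveRoot ζ m)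
    {i : ℕ} (hi0 : i ≠ 0) (him : i < m) : (ζ ^ i).im ≠ 0 := by
  intro h
  set c := ζ ^ i with hc
  have hm0 : m ≠ 0 := by omega
  have hcm : c ^ m = 1 := by
    rw [hc, ← pow_mul, mul_comm, pow_mul, hζ.pow_eq_one, one_pow]
  have habs : ‖c‖ = 1 := gz_abs_pow_one hm0 hζ i
  have hcre : c = (c.re : ℂ) := by
    apply Complex.ext <;> simp [h]
  have habs' : |c.re| = 1 := by
    rw [← Real.norm_eq_abs, ← Complex.norm_real, ← hcre, habs]
  rcases abs_eq (by norm_num : (0:ℝ) ≤ 1) |>.mp habs' with h1 | h1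
  · have : c = 1 := by rw [hcre, h1]; norm_num
    exact hζ.pow_ne_one_of_pos_of_lt hi0 him this
  · have hcneg : c = -1 := by rw [hcre, h1]; norm_num
    rw [hcneg, hodd.neg_one_pow] at hcm
    norm_num at hcm

private lemma gz_re_ne (m : ℕ) (hodd : Odd m) {ζ : ℂ} (hζ : IsPrimitiveRoot ζ m)
    (i : ℕ) : (ζ ^ i).re ≠ 0 := by
  intro h
  set c := ζ ^ i with hc
  have hm0 : m ≠ 0 := by rintro rfl; exact (Nat.not_odd_zero) hodd
  have hcm : c ^ m = 1 := by
    rw [hc, ← pow_mul, mul_comm, pow_mul, hζ.pow_eq_one, one_pow]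
  have hcI : c = (c.im : ℂ) * Complex.I := by
    apply Complex.ext <;> simp [h]
  obtain ⟨k, hk⟩ := hodd
  have hIpow : Complex.I ^ m = (-1 : ℂ) ^ k * Complex.I := by
    rw [hk, pow_succ, pow_mul, Complex.I_sq]
  have hre0 : (c ^ m).re = 0 := by
    rw [hcI, mul_pow, hIpow]
    have h1 : ((-1 : ℂ)) ^ k = (((-1 : ℝ)) ^ k : ℝ) := by push_cast; ring
    rw [h1, ← Complex.ofReal_pow, ← mul_assoc, ← Complex.ofReal_mul]
    simp [← Complex.ofReal_pow, ← Complex.ofReal_mul]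
  rw [hcm] at hre0
  norm_num at hre0

/-- For `m` odd and `E ∈ ℝ`, the rational function
`g_{E+iε}(x) = (x+1)^{m-1}(x-(E+iε))/((x+1)^m-(1+E+iε)^m)` is bounded on the real line,
uniformly for small `ε ≠ 0`. -/
theorem gz_bounded_uniformly_near_real_energy (m : ℕ) (hm : 1 ≤ m) (hodd : Odd m) (E : ℝ) :
    ∃ ε₀ C : ℝ, 0 < ε₀ ∧ 0 < C ∧ ∀ x : ℝ, ∀ ε : ℝ, 0 < |ε| → |ε| < ε₀ →
      ‖(x : ℂ) + 1‖ ^ (m - 1) *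
          ‖(x : ℂ) - ((E : ℂ) + (ε : ℂ) * Complex.I)‖ ≤
        C * ‖((x : ℂ) + 1) ^ m - (1 + (E : ℂ) + (ε : ℂ) * Complex.I) ^ m‖ := by
  have hm0 : 0 < m := hm
  have hmne : m ≠ 0 := by omega
  obtain ⟨ζ, hζ⟩ : ∃ ζ : ℂ, IsPrimitiveRoot ζ m :=
    ⟨_, Complex.isPrimitiveRoot_exp m hmne⟩
  set s : Finset ℕ := (Finset.range m).erase 0 with hs
  obtain ⟨u, hu⟩ : ∃ u : ℝ, u = 1 + E := ⟨_, rfl⟩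
  have habs1 : ∀ i : ℕ, ‖ζ ^ i‖ = 1 := gz_abs_pow_one hmne hζ
  -- uniform lower bounds on |im| and |re| of the nontrivial roots of unity
  obtain ⟨γ₁, hγ₁pos, hγ₁le, hγ₁⟩ :
      ∃ γ : ℝ, 0 < γ ∧ γ ≤ 1 ∧ ∀ i ∈ s, γ ≤ |(ζ ^ i).im| := by
    rcases s.eq_empty_or_nonempty with he | hne
    · exact ⟨1, one_pos, le_refl 1, by simp [he]⟩
    · obtain ⟨j, hj, hjmin⟩ := s.exists_min_image (fun i => |(ζ ^ i).im|) hne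
      have hjpos : 0 < |(ζ ^ j).im| := by
        rw [abs_pos]
        exact gz_im_ne m hodd hζ (Finset.ne_of_mem_erase hj)
          (Finset.mem_range.mp (Finset.mem_of_mem_erase hj))
      exact ⟨min (|(ζ ^ j).im|) 1, lt_min hjpos one_pos, min_le_right _ _,
        fun i hi => le_trans (min_le_left _ _) (hjmin i hi)⟩
  obtain ⟨γ₂, hγ₂pos, hγ₂⟩ :
      ∃ γ : ℝ, 0 < γ ∧ ∀ i ∈ s, γ ≤ |(ζ ^ i).re| := by
    rcases s.eq_empty_or_nonempty with he | hne
    · exact ⟨1, one_pos, by simp [he]⟩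
    · obtain ⟨j, hj, hjmin⟩ := s.exists_min_image (fun i => |(ζ ^ i).re|) hne
      have hjpos : 0 < |(ζ ^ j).re| := by
        rw [abs_pos]; exact gz_re_ne m hodd hζ j
      exact ⟨|(ζ ^ j).re|, hjpos, hjmin⟩
  -- choose ε₀ and γ such that |Im (ζ^i w)| ≥ γ |w|
  obtain ⟨ε₀, hε₀pos, γ, hγpos, hkey⟩ :
      ∃ ε₀ : ℝ, 0 < ε₀ ∧ ∃ γ : ℝ, 0 < γ ∧ ∀ ε : ℝ, 0 < |ε| → |ε| < ε₀ → ∀ i ∈ s,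
        γ * ‖(u : ℂ) + ε * Complex.I‖ ≤ |((ζ ^ i) * ((u : ℂ) + ε * Complex.I)).im| := by
    by_cases hu0 : u = 0
    · refine ⟨1, one_pos, γ₂, hγ₂pos, fun ε hε hε' i hi => ?_⟩
      have him : ((ζ ^ i) * ((u : ℂ) + ε * Complex.I)).im = (ζ ^ i).re * ε := by
        simp [Complex.mul_im, hu0]
      have habsw : ‖(u : ℂ) + ε * Complex.I‖ = |ε| := by
        rw [hu0]
        push_cast
        rw [zero_add, norm_mul, Complex.norm_I, Complex.norm_real, Real.norm_eq_abs, mul_one]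
      rw [him, habsw, abs_mul]
      have := hγ₂ i hi
      nlinarith [abs_nonneg ε]
    · refine ⟨γ₁ * |u| / 2, by positivity, γ₁ / 4, by positivity, fun ε hε hε' i hi => ?_⟩
      have him : ((ζ ^ i) * ((u : ℂ) + ε * Complex.I)).im
          = (ζ ^ i).im * u + (ζ ^ i).re * ε := by
        simp [Complex.mul_im]; ring
      have habsw : ‖(u : ℂ) + ε * Complex.I‖ ≤ |u| + |ε| := by
        calc ‖(u : ℂ) + ε * Complex.I‖
            ≤ ‖(u : ℂ)‖ + ‖(ε : ℂ) * Complex.I‖ := norm_add_le _ _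
        _ = |u| + |ε| := by
            rw [norm_mul, Complex.norm_I, Complex.norm_real, Complex.norm_real, Real.norm_eq_abs, Real.norm_eq_abs, mul_one]
      have h1 : |(ζ ^ i).re| ≤ 1 := by
        calc |(ζ ^ i).re| ≤ ‖ζ ^ i‖ := Complex.abs_re_le_norm _
        _ = 1 := habs1 i
      have h2 : γ₁ ≤ |(ζ ^ i).im| := hγ₁ i hi
      have h3 : γ₁ * |u| - |ε| ≤ |(ζ ^ i).im * u + (ζ ^ i).re * ε| := by
        have habsle : |(ζ ^ i).im * u| - |(ζ ^ i).re * ε| ≤ |(ζ ^ i).im * u + (ζ ^ i).re * ε| := by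
          have := abs_sub_abs_le_abs_sub ((ζ ^ i).im * u) (-((ζ ^ i).re * ε))
          simpa [sub_neg_eq_add] using this
        rw [abs_mul, abs_mul] at habsle
        have hupos : 0 < |u| := abs_pos.mpr hu0
        nlinarith [abs_nonneg ε, abs_nonneg ((ζ ^ i).re)]
      rw [him]
      have hupos : 0 < |u| := abs_pos.mpr hu0
      have hεsmall : |ε| ≤ γ₁ * |u| / 2 := le_of_lt hε'
      calc γ₁ / 4 * ‖(u : ℂ) + ε * Complex.I‖
          ≤ γ₁ / 4 * (|u| + |ε|) := by
            apply mul_le_mul_of_nonneg_left habsw (by positivity)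
        _ ≤ γ₁ * |u| - |ε| := by nlinarith
        _ ≤ _ := h3
  -- the per-root distance bound
  set δ : ℝ := min (1/2) (γ/2) with hδ
  have hδpos : 0 < δ := lt_min (by norm_num) (by positivity)
  have hδle : δ ≤ 1/2 := min_le_left _ _
  have hroot : ∀ (y : ℝ) (ε : ℝ), 0 < |ε| → |ε| < ε₀ → ∀ i ∈ s,
      δ * |y| ≤ ‖(y : ℂ) - (ζ ^ i) * ((u : ℂ) + ε * Complex.I)‖ := by
    intro y ε hε hε' i hi
    set w : ℂ := (u : ℂ) + ε * Complex.I with hw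
    set a : ℂ := (ζ ^ i) * w with ha
    have habsa : ‖a‖ = ‖w‖ := by
      rw [ha, norm_mul, habs1 i, one_mul]
    have hima : γ * ‖a‖ ≤ |a.im| := by
      rw [habsa]; exact hkey ε hε hε' i hi
    rcases le_or_gt |y| (2 * ‖a‖) with hyle | hygt
    · have h4 : |a.im| ≤ ‖(y : ℂ) - a‖ := by
        have him : ((y : ℂ) - a).im = -a.im := by simp
        calc |a.im| = |((y : ℂ) - a).im| := by rw [him, abs_neg]
        _ ≤ ‖(y : ℂ) - a‖ := Complex.abs_im_le_norm _
      have h5 : δ * |y| ≤ γ / 2 * (2 * ‖a‖) := by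
        have hδγ : δ ≤ γ / 2 := min_le_right _ _
        nlinarith [abs_nonneg y, norm_nonneg a]
      calc δ * |y| ≤ γ * ‖a‖ := by linarith
      _ ≤ |a.im| := hima
      _ ≤ _ := h4
    · have h4 : |y| - ‖a‖ ≤ ‖(y : ℂ) - a‖ := by
        have h5 : ‖(y : ℂ)‖ ≤ ‖(y : ℂ) - a‖ + ‖a‖ := by
          calc ‖(y : ℂ)‖ = ‖((y : ℂ) - a) + a‖ := by
                rw [sub_add_cancel]
          _ ≤ _ := norm_add_le _ _
        have h6 : ‖(y : ℂ)‖ = |y| := by rw [Complex.norm_real, Real.norm_eq_abs]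
        linarith
      have h7 : δ * |y| ≤ |y| / 2 := by nlinarith [abs_nonneg y]
      linarith
  refine ⟨ε₀, (1/δ) ^ (m - 1), hε₀pos, by positivity, fun x ε hε hε' => ?_⟩
  set w : ℂ := (u : ℂ) + ε * Complex.I with hw
  have hwid : (1 + (E : ℂ) + (ε : ℂ) * Complex.I) = w := by
    rw [hw, hu]; push_cast; ring
  have hyid : ((x : ℂ) + 1) = ((x + 1 : ℝ) : ℂ) := by push_cast; ring
  have hxid : ((x : ℂ) - ((E : ℂ) + (ε : ℂ) * Complex.I)) = ((x + 1 : ℝ) : ℂ) - w := by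
    rw [hw, hu]; push_cast; ring
  rw [hwid, hyid, hxid]
  set y : ℝ := x + 1 with hy
  have hfact := gz_fact_eq m hm0 hζ (y : ℂ) w
  have habs : ‖(y:ℂ) ^ m - w ^ m‖
      = ∏ i ∈ Finset.range m, ‖(y : ℂ) - ζ ^ i * w‖ := by
    rw [hfact, norm_prod]
  have h0mem : (0 : ℕ) ∈ Finset.range m := Finset.mem_range.mpr hm0
  have hsplit : ∏ i ∈ Finset.range m, ‖(y : ℂ) - ζ ^ i * w‖
      = ‖(y : ℂ) - w‖ * ∏ i ∈ s, ‖(y : ℂ) - ζ ^ i * w‖ := by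
    rw [hs, ← Finset.mul_prod_erase _ _ h0mem]
    simp
  have hcard : s.card = m - 1 := by
    rw [hs, Finset.card_erase_of_mem h0mem, Finset.card_range]
  have hprodge : (δ * |y|) ^ (m - 1) ≤ ∏ i ∈ s, ‖(y : ℂ) - ζ ^ i * w‖ := by
    calc (δ * |y|) ^ (m - 1) = ∏ _i ∈ s, (δ * |y|) := by rw [Finset.prod_const, hcard]
    _ ≤ _ := Finset.prod_le_prod (fun i _ => by positivity)
        (fun i hi => hroot y ε hε hε' i hi)
  have hyabs : ‖(y : ℂ)‖ = |y| := by rw [Complex.norm_real, Real.norm_eq_abs]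
  have hge : ‖(y : ℂ) - w‖ * (δ * |y|) ^ (m - 1)
      ≤ ‖(y:ℂ) ^ m - w ^ m‖ := by
    rw [habs, hsplit]
    exact mul_le_mul_of_nonneg_left hprodge (norm_nonneg _)
  have hC : ((1/δ) ^ (m-1)) * (δ * |y|) ^ (m - 1) = |y| ^ (m - 1) := by
    rw [← mul_pow]
    congr 1
    field_simp
  calc ‖(y : ℂ)‖ ^ (m - 1) * ‖(y : ℂ) - w‖
      = ((1/δ) ^ (m-1)) * (‖(y : ℂ) - w‖ * (δ * |y|) ^ (m - 1)) := by
        rw [hyabs, ← hC]; ring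
    _ ≤ ((1/δ) ^ (m-1)) * ‖(y:ℂ) ^ m - w ^ m‖ := by
        apply mul_le_mul_of_nonneg_left hge (by positivity)
end
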